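/- Let G be a simple graph and A a parameter list. For every acyclic partial orientation O of G there exists an A-admissible partial orientation O' of G with indeg(O') = indeg(O). -/

import Mathlib

open Finset SimpleGraph
open scoped Classical

variable {V : Type*} [Fintype V] [DecidableEq V]

/-- `O` is a partial orientation of `G`: a set of steps along edges of `G`,
containing at most one direction per edge. -/
def IsPO (G : SimpleGraph V) (O : Finset (V × V)) : Prop :=
  ∀ p ∈ O, G.Adj p.1 p.2 ∧ (p.2, p.1) ∉ O

/-- A total orientation orients every edge. -/
def IsTotalOn (G : SimpleGraph V) (O : Finset (V × V)) : Prop :=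
  ∀ u v : V, G.Adj u v → (u, v) ∈ O ∨ (v, u) ∈ O

/-- `O` contains a directed cycle of steps. -/
def HasDirCycle (O : Finset (V × V)) : Prop :=
  ∃ (k : ℕ) (c : Fin (k + 1) → V), 1 ≤ k ∧ Function.Injective c ∧
    ∀ i : Fin (k + 1), (c i, c (i + 1)) ∈ O

/-- An acyclic partial orientation. -/
def IsAcyclicPO (G : SimpleGraph V) (O : Finset (V × V)) : Prop :=
  IsPO G O ∧ ¬ HasDirCycle O

/-- Indegree of vertex `v` in the orientation `O`. -/
def indeg (O : Finset (V × V)) (v : V) : ℕ := (O.filter (fun p => p.2 = v)).card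

/-- A potential cycle for `O`: a directed cycle of steps, each compatible with `O`
(i.e. whose reversal is not in `O`). -/
def IsPotCycle (G : SimpleGraph V) (O : Finset (V × V)) {k : ℕ} (c : Fin (k + 1) → V) : Prop :=
  1 ≤ k ∧ Function.Injective c ∧
    ∀ i : Fin (k + 1), G.Adj (c i) (c (i + 1)) ∧ (c (i + 1), c i) ∉ O

/-- Score of a step compatible with `O`, with respect to the parameter list `a`. -/
def stepScore (a : V → V → ℝ) (O : Finset (V × V)) (p : V × V) : ℝ :=
  if p ∈ O then -(a p.2 p.1) else a p.1 p.2

/-- Score of a potential cycle. -/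
def cycScore (a : V → V → ℝ) (O : Finset (V × V)) {k : ℕ} (c : Fin (k + 1) → V) : ℝ :=
  ∑ i : Fin (k + 1), stepScore a O (c i, c (i + 1))

/-- `O` is `a`-admissible: every potential cycle has strictly positive score. -/
def IsAdmissible (G : SimpleGraph V) (a : V → V → ℝ) (O : Finset (V × V)) : Prop :=
  ∀ (k : ℕ) (c : Fin (k + 1) → V), IsPotCycle G O c → 0 < cycScore a O c

/-- `O` is almost-`a`-admissible: not admissible, but no potential cycle has negative score. -/
def IsAlmostAdmissible (G : SimpleGraph V) (a : V → V → ℝ) (O : Finset (V × V)) : Prop :=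
  ¬ IsAdmissible G a O ∧
    ∀ (k : ℕ) (c : Fin (k + 1) → V), IsPotCycle G O c → 0 ≤ cycScore a O c

/-- The parameter list condition: the central region of `Σ_G(A)` is nonempty. -/
def HasCentral (G : SimpleGraph V) (a : V → V → ℝ) : Prop :=
  ∃ x : V → ℝ, ∀ u v : V, G.Adj u v → x u - x v < a u v

/-- Number of edges of `G_•` from `i` to vertices outside `W` (including the edge to the sink). -/
noncomputable def dW (G : SimpleGraph V) (W : Finset V) (i : V) : ℕ :=
  1 + (Finset.univ.filter (fun u => u ∉ W ∧ G.Adj i u)).card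

/-- `c` is a parking function of `G_•` with respect to the added sink `v₀`. -/
def IsPF (G : SimpleGraph V) (c : V → ℤ) : Prop :=
  ∀ W : Finset V, W.Nonempty → ∃ i ∈ W, 0 ≤ c i ∧ c i < dW G W i



noncomputable def fcount (G : SimpleGraph V) (a : V → V → ℝ) (y : V → ℝ) (v : V) : ℕ :=
  (univ.filter (fun u => G.Adj u v ∧ a v u < y v - y u)).card

noncomputable def Ocand (G : SimpleGraph V) (a : V → V → ℝ) (y : V → ℝ) : Finset (V × V) :=
  univ.filter (fun p => G.Adj p.1 p.2 ∧ a p.2 p.1 < y p.2 - y p.1)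

lemma mem_Ocand {G : SimpleGraph V} {a : V → V → ℝ} {y : V → ℝ} {p : V × V} :
    p ∈ Ocand G a y ↔ G.Adj p.1 p.2 ∧ a p.2 p.1 < y p.2 - y p.1 := by
  simp [Ocand]

lemma Ocand_isPO {G : SimpleGraph V} {a : V → V → ℝ}
    (hpos : ∀ u v, G.Adj u v → 0 < a u v + a v u) (y : V → ℝ) :
    IsPO G (Ocand G a y) := by
  intro p hp
  rw [mem_Ocand] at hp
  refine ⟨hp.1, ?_⟩
  rw [mem_Ocand]
  rintro ⟨h1, h2⟩
  have := hpos p.1 p.2 hp.1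
  simp only at h2
  linarith [hp.2]

lemma indeg_Ocand (G : SimpleGraph V) (a : V → V → ℝ) (y : V → ℝ) (v : V) :
    indeg (Ocand G a y) v = fcount G a y v := by
  unfold indeg fcount
  have himg : (Ocand G a y).filter (fun p => p.2 = v)
      = (univ.filter (fun u => G.Adj u v ∧ a v u < y v - y u)).image (fun u => (u, v)) := by
    ext p
    simp only [Finset.mem_filter, Finset.mem_image, mem_Ocand, Finset.mem_univ, true_and]
    constructor
    · rintro ⟨⟨hadj, hlt⟩, h2⟩
      exact ⟨p.1, ⟨by rwa [h2] at hadj, by rwa [h2] at hlt⟩, by rw [← h2]⟩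
    · rintro ⟨u, ⟨hadj, hlt⟩, rfl⟩
      exact ⟨⟨hadj, hlt⟩, rfl⟩
  rw [himg, Finset.card_image_of_injective]
  intro u u' h
  exact (Prod.mk.injEq _ _ _ _).mp h |>.1

lemma telescope_fin (k : ℕ) (g : Fin (k + 1) → ℝ) : ∑ i : Fin (k + 1), (g i - g (i + 1)) = 0 := by
  rw [Finset.sum_sub_distrib]
  have : ∑ i : Fin (k + 1), g (i + 1) = ∑ i : Fin (k + 1), g i :=
    Fintype.sum_equiv (Equiv.addRight (1 : Fin (k + 1))) _ _ (fun i => rfl)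
  rw [this, sub_self]

lemma Ocand_admissible {G : SimpleGraph V} {a : V → V → ℝ} {y : V → ℝ}
    (hx : ∀ u v, G.Adj u v → y v - y u ≠ a v u) :
    IsAdmissible G a (Ocand G a y) := by
  intro k c hc
  obtain ⟨hk, hinj, hstep⟩ := hc
  have key : ∀ i : Fin (k + 1),
      y (c i) - y (c (i + 1)) < stepScore a (Ocand G a y) (c i, c (i + 1)) := by
    intro i
    obtain ⟨hadj, hrev⟩ := hstep i
    unfold stepScore
    by_cases hmem : (c i, c (i + 1)) ∈ Ocand G a y
    · rw [if_pos hmem]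
      rw [mem_Ocand] at hmem
      have := hmem.2
      simp only at this ⊢
      linarith
    · rw [if_neg hmem]
      rw [mem_Ocand] at hrev
      push_neg at hrev
      have hle := hrev (G.adj_symm hadj)
      have hne := hx (c (i + 1)) (c i) (G.adj_symm hadj)
      simp only at hle hne ⊢
      exact lt_of_le_of_ne hle hne
  have hsum := Finset.sum_lt_sum_of_nonempty (Finset.univ_nonempty) (fun i _ => key i)
  have htele := telescope_fin k (fun i => y (c i))
  unfold cycScore
  calc (0:ℝ) = ∑ i : Fin (k + 1), (y (c i) - y (c (i + 1))) := htele.symm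
    _ < _ := hsum


def GoodE1 (G : SimpleGraph V) (a : V → V → ℝ) (y : V → ℝ) : Prop :=
  ∀ u v, G.Adj u v → y v - y u ≠ a v u

def GoodE2 (G : SimpleGraph V) (a : V → V → ℝ) (y : V → ℝ) : Prop :=
  ∀ w u u', G.Adj u w → G.Adj u' w → u ≠ u' → y u + a w u ≠ y u' + a w u'



lemma cycle_of_no_source {G : SimpleGraph V} {O : Finset (V × V)} (hPO : IsPO G O)
    (W : Finset V) (hW : W.Nonempty)
    (h : ∀ i ∈ W, ∃ u ∈ W, (u, i) ∈ O) : HasDirCycle O := by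
  classical
  have hg : ∀ i : {z // z ∈ W}, ∃ u : {z // z ∈ W}, (u.1, i.1) ∈ O := by
    rintro ⟨i, hi⟩
    obtain ⟨u, hu, huO⟩ := h i hi
    exact ⟨⟨u, hu⟩, huO⟩
  choose g hgspec using hg
  obtain ⟨z₀, hz₀⟩ := hW
  obtain ⟨m, n, hmn, heq⟩ : ∃ m n : ℕ, m < n ∧ g^[m] ⟨z₀, hz₀⟩ = g^[n] ⟨z₀, hz₀⟩ := by
    obtain ⟨m, n, hne, heq⟩ := Finite.exists_ne_map_eq_of_infinite (fun n : ℕ => g^[n] ⟨z₀, hz₀⟩)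
    rcases lt_or_gt_of_ne hne with hlt | hlt
    · exact ⟨m, n, hlt, heq⟩
    · exact ⟨n, m, hlt, heq.symm⟩
  have hq : ∃ q, 0 < q ∧ g^[q] (g^[m] ⟨z₀, hz₀⟩) = g^[m] ⟨z₀, hz₀⟩ := by
    refine ⟨n - m, by omega, ?_⟩
    rw [← Function.iterate_add_apply, show n - m + m = n by omega, ← heq]
  set z : {x // x ∈ W} := g^[m] ⟨z₀, hz₀⟩
  clear_value z
  obtain ⟨p, ⟨hp0, hpz⟩, hpmin⟩ :
      ∃ p, (0 < p ∧ g^[p] z = z) ∧ ∀ q, q < p → ¬(0 < q ∧ g^[q] z = z) :=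
    ⟨Nat.find hq, Nat.find_spec hq, fun q hq' => Nat.find_min hq hq'⟩
  have hp2 : 2 ≤ p := by
    rcases Nat.lt_or_ge p 2 with hcon | h2
    · exfalso
      have hp1 : p = 1 := by omega
      have hz1 : g z = z := by rw [hp1] at hpz; exact hpz
      have : (z.1, z.1) ∈ O := by
        have hs := hgspec z
        rw [hz1] at hs
        exact hs
      exact G.irrefl (hPO _ this).1
    · exact h2
  obtain ⟨k, hkp⟩ : ∃ k, k + 1 = p := ⟨p - 1, by omega⟩
  have hk1 : 1 ≤ k := by omega
  have hdist : ∀ s t : ℕ, s ≤ k → t ≤ k → g^[s] z = g^[t] z → s = t := by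
    have key : ∀ s t : ℕ, s < t → t ≤ k → g^[s] z ≠ g^[t] z := by
      intro s t hst htk habs
      have hr : g^[k + 1 - t + s] z = z := by
        have h3 : g^[k + 1 - t] (g^[s] z) = g^[k + 1 - t] (g^[t] z) := by rw [habs]
        rw [← Function.iterate_add_apply, ← Function.iterate_add_apply] at h3
        rw [show k + 1 - t + t = p by omega, hpz] at h3
        exact h3
      exact hpmin (k + 1 - t + s) (by omega) ⟨by omega, hr⟩
    intro s t hs ht hEq
    rcases lt_trichotomy s t with h | h | h
    · exact absurd hEq (key s t h ht)
    · exact h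
    · exact absurd hEq.symm (key t s h hs)
  refine ⟨k, fun j => (g^[k - j.1] z).1, hk1, ?_, ?_⟩
  · intro i j hij
    have : g^[k - i.1] z = g^[k - j.1] z := Subtype.ext hij
    have h1 := hdist (k - i.1) (k - j.1) (by omega) (by omega) this
    have hi := i.2
    have hj := j.2
    apply Fin.ext
    omega
  · intro i
    show ((g^[k - i.1] z).1, (g^[k - (i + 1).1] z).1) ∈ O
    rcases eq_or_ne i (Fin.last k) with hlast | hlast
    · have h1 : (i + 1).1 = 0 := by rw [hlast]; simp
      have h0 : i.1 = k := by rw [hlast]; rfl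
      rw [h1, h0]
      simp only [Nat.sub_self, Function.iterate_zero, id_eq, Nat.sub_zero]
      have hs := hgspec (g^[k] z)
      have h5 : g (g^[k] z) = g^[k + 1] z := (Function.iterate_succ_apply' g k z).symm
      rw [h5, hkp, hpz] at hs
      exact hs
    · have hik : i.1 < k := by
        have h2 := i.2
        have h3 : i.1 ≠ k := fun hcon => hlast (Fin.ext (by simp [hcon]))
        omega
      have h1 : (i + 1).1 = i.1 + 1 := by
        rw [Fin.val_add_one, if_neg hlast]
      rw [h1, show k - i.1 = (k - (i.1 + 1)) + 1 by omega, Function.iterate_succ_apply']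
      exact hgspec _

lemma parking_of_acyclic {G : SimpleGraph V} {O : Finset (V × V)} (hO : IsAcyclicPO G O)
    (W : Finset V) (hW : W.Nonempty) :
    ∃ i ∈ W, indeg O i ≤ (univ.filter (fun u => u ∉ W ∧ G.Adj i u)).card := by
  by_contra hcon
  push_neg at hcon
  apply hO.2
  apply cycle_of_no_source hO.1 W hW
  intro i hi
  by_contra hno
  push_neg at hno
  have hsub : O.filter (fun p => p.2 = i)
      ⊆ (O.filter (fun p => p.2 = i)).filter (fun p => p.1 ∉ W) := by
    intro p hp
    simp only [Finset.mem_filter] at hp ⊢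
    refine ⟨hp, ?_⟩
    intro hpW
    apply hno p.1 hpW
    have hpp : (p.1, p.2) ∈ O := by rw [Prod.mk.eta]; exact hp.1
    rwa [hp.2] at hpp
  have hcard : indeg O i ≤ ((O.filter (fun p => p.2 = i)).filter (fun p => p.1 ∉ W)).card :=
    Finset.card_le_card hsub
  have hcard2 : ((O.filter (fun p => p.2 = i)).filter (fun p => p.1 ∉ W)).card
      ≤ (univ.filter (fun u => u ∉ W ∧ G.Adj i u)).card := by
    apply Finset.card_le_card_of_injOn (fun p => p.1)
    · intro p hp
      simp only [Finset.mem_coe, Finset.mem_filter] at hp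
      obtain ⟨⟨hpO, hpi⟩, hp2⟩ := hp
      simp only [Finset.mem_coe, Finset.mem_filter]
      refine ⟨Finset.mem_univ _, hp2, ?_⟩
      have h4 := (hO.1 p hpO).1
      rw [hpi] at h4
      exact G.adj_symm h4
    · intro p hp q hq hpq
      simp only [Finset.mem_coe, Finset.mem_filter] at hp hq
      have : p.2 = q.2 := by rw [hp.1.2, hq.1.2]
      exact Prod.ext hpq this
  exact absurd (le_trans hcard hcard2) (not_le.mpr (hcon i hi))

lemma indeg_le_deg {G : SimpleGraph V} {O : Finset (V × V)} (hPO : IsPO G O) (v : V) :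
    indeg O v ≤ (univ.filter (fun u => G.Adj u v)).card := by
  apply Finset.card_le_card_of_injOn (fun p => p.1)
  · intro p hp
    simp only [Finset.mem_coe, Finset.mem_filter] at hp
    simp only [Finset.mem_coe, Finset.mem_filter]
    have h4 := (hPO p hp.1).1
    rw [hp.2] at h4
    exact ⟨Finset.mem_univ _, h4⟩
  · intro p hp q hq hpq
    simp only [Finset.mem_coe, Finset.mem_filter] at hp hq
    have : p.2 = q.2 := by rw [hp.2, hq.2]
    exact Prod.ext hpq this

lemma exists_initial {G : SimpleGraph V} {a : V → V → ℝ}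
    (hA : ∃ x : V → ℝ, ∀ u v : V, G.Adj u v → x u - x v < a u v) :
    ∃ x : V → ℝ, (∀ u v : V, G.Adj u v → x u - x v < a u v) ∧ GoodE2 G a x := by
  classical
  obtain ⟨x₀, hx₀⟩ := hA
  -- injective real embedding
  obtain ⟨φ, hφ⟩ : ∃ φ : V → ℝ, Function.Injective φ := by
    refine ⟨fun v => ((Fintype.equivFin V v : ℕ) : ℝ), ?_⟩
    intro u w h
    have : (Fintype.equivFin V u : ℕ) = (Fintype.equivFin V w : ℕ) := Nat.cast_injective h
    exact (Fintype.equivFin V).injective (Fin.ext this)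
  set S : Finset ℝ := insert (1 : ℝ)
    (((univ : Finset (V × V)).filter (fun p => G.Adj p.1 p.2)).image
      (fun p => a p.1 p.2 - (x₀ p.1 - x₀ p.2))) with hS
  have hSne : S.Nonempty := ⟨1, Finset.mem_insert_self _ _⟩
  have hSpos : ∀ s ∈ S, (0 : ℝ) < s := by
    intro s hs
    rw [hS, Finset.mem_insert] at hs
    rcases hs with rfl | hs
    · norm_num
    · obtain ⟨p, hp, rfl⟩ := Finset.mem_image.mp hs
      have := hx₀ p.1 p.2 (Finset.mem_filter.mp hp).2
      linarith
  set m := S.min' hSne with hm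
  have hmpos : 0 < m := hSpos _ (S.min'_mem hSne)
  set Φ : Finset ℝ := insert (1 : ℝ)
    (((univ : Finset (V × V))).image (fun p => |φ p.1 - φ p.2|)) with hΦ
  have hΦne : Φ.Nonempty := ⟨1, Finset.mem_insert_self _ _⟩
  set M := Φ.max' hΦne with hM
  have hMpos : 0 < M := lt_of_lt_of_le one_pos (Φ.le_max' 1 (Finset.mem_insert_self _ _))
  set η := m / (2 * M) with hη
  have hηpos : 0 < η := by positivity
  set Bad : Finset ℝ := ((univ : Finset (V × V × V)).filter (fun t => t.2.1 ≠ t.2.2)).image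
    (fun t => ((x₀ t.2.2 + a t.1 t.2.2) - (x₀ t.2.1 + a t.1 t.2.1)) / (φ t.2.1 - φ t.2.2))
    with hBad
  obtain ⟨ε, hεmem⟩ : ((Set.Ioo (0:ℝ) η) \ (Bad : Set ℝ)).Nonempty := by
    apply Set.Infinite.nonempty
    exact Set.Infinite.diff (Set.infinite_coe_iff.mp (Set.Ioo.infinite hηpos)) (Bad.finite_toSet)
  obtain ⟨⟨hε0, hεη⟩, hεBad⟩ := hεmem
  refine ⟨fun v => x₀ v + ε * φ v, ?_, ?_⟩
  · intro u v hadj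
    have hslack : m ≤ a u v - (x₀ u - x₀ v) := by
      apply S.min'_le
      rw [hS, Finset.mem_insert]
      right
      exact Finset.mem_image.mpr ⟨(u, v), Finset.mem_filter.mpr ⟨Finset.mem_univ _, hadj⟩, rfl⟩
    have hbound : |φ u - φ v| ≤ M := by
      apply Φ.le_max'
      rw [hΦ, Finset.mem_insert]
      right
      exact Finset.mem_image.mpr ⟨(u, v), Finset.mem_univ _, rfl⟩
    have h1 : ε * (φ u - φ v) ≤ ε * |φ u - φ v| :=
      mul_le_mul_of_nonneg_left (le_abs_self _) (le_of_lt hε0)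
    have h2 : ε * |φ u - φ v| ≤ ε * M := mul_le_mul_of_nonneg_left hbound (le_of_lt hε0)
    have h3 : ε * M < η * M := mul_lt_mul_of_pos_right hεη hMpos
    have h4 : η * M = m / 2 := by
      rw [hη]
      field_simp
    show x₀ u + ε * φ u - (x₀ v + ε * φ v) < a u v
    nlinarith
  · intro w u u' hadj hadj' hne habs
    apply hεBad
    have hφne : φ u - φ u' ≠ 0 := sub_ne_zero.mpr (fun h => hne (hφ h))
    have hval : ε = ((x₀ u' + a w u') - (x₀ u + a w u)) / (φ u - φ u') := by
      rw [eq_div_iff hφne]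
      ring_nf
      ring_nf at habs
      linarith
    rw [Finset.mem_coe, hBad]
    exact Finset.mem_image.mpr ⟨(w, u, u'),
      Finset.mem_filter.mpr ⟨Finset.mem_univ _, hne⟩, hval.symm⟩

lemma step_exists {G : SimpleGraph V} {a : V → V → ℝ} {c : V → ℕ} {y : V → ℝ}
    (hE1 : GoodE1 G a y) (hE2 : GoodE2 G a y)
    (hle : ∀ w, fcount G a y w ≤ c w)
    (hdeg : ∀ w, c w ≤ (univ.filter (fun u => G.Adj u w)).card)
    {v : V} (hv : fcount G a y v < c v) :
    ∃ (y' : V → ℝ) (u : V), GoodE1 G a y' ∧ GoodE2 G a y' ∧ (∀ w, fcount G a y' w ≤ c w) ∧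
      (∀ w, w ≠ v → y' w = y w) ∧ (∀ w, y w ≤ y' w) ∧ y v < y' v ∧
      G.Adj u v ∧ y v < y u + a v u ∧ y u + a v u < y' v := by
  classical
  set N := univ.filter (fun u => G.Adj u v) with hN
  set counted := univ.filter (fun u => G.Adj u v ∧ a v u < y v - y u) with hcnt
  have hcsub : counted ⊆ N := by
    intro u hu
    rw [hcnt, Finset.mem_filter] at hu
    rw [hN, Finset.mem_filter]
    exact ⟨hu.1, hu.2.1⟩
  have hfc : fcount G a y v = counted.card := rfl
  have hcardlt : counted.card < N.card := by
    rw [← hfc]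
    exact lt_of_lt_of_le hv (hdeg v)
  obtain ⟨u₀, hu₀N, hu₀c⟩ : ∃ u₀ ∈ N, u₀ ∉ counted := by
    have hnotsub : ¬ N ⊆ counted := fun hsub =>
      absurd (Finset.card_le_card hsub) (not_le.mpr hcardlt)
    exact Finset.not_subset.mp hnotsub
  have hadj₀ : G.Adj u₀ v := (Finset.mem_filter.mp hu₀N).2
  have hu₀lt : y v < y u₀ + a v u₀ := by
    rw [hcnt, Finset.mem_filter] at hu₀c
    push_neg at hu₀c
    have h1 := hu₀c (Finset.mem_univ _) hadj₀
    have h2 := hE1 u₀ v hadj₀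
    have : y v - y u₀ < a v u₀ := lt_of_le_of_ne h1 h2
    linarith
  set TAvals := (N.filter (fun u => y v < y u + a v u)).image (fun u => y u + a v u) with hTAv
  have hTAne : TAvals.Nonempty := by
    refine ⟨y u₀ + a v u₀, ?_⟩
    rw [hTAv]
    exact Finset.mem_image.mpr ⟨u₀, Finset.mem_filter.mpr ⟨hu₀N, hu₀lt⟩, rfl⟩
  set tstar := TAvals.min' hTAne with htstar
  obtain ⟨ustar, hustar, hθ⟩ : ∃ u ∈ N.filter (fun u => y v < y u + a v u),
      y u + a v u = tstar := Finset.mem_image.mp (TAvals.min'_mem hTAne)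
  have hadjstar : G.Adj ustar v := (Finset.mem_filter.mp ((Finset.mem_filter.mp hustar).1)).2
  have hyvt : y v < tstar := by
    rw [← hθ]
    exact (Finset.mem_filter.mp hustar).2
  set T2 := TAvals.filter (fun r => tstar < r) with hT2
  set sstar := if h : T2.Nonempty then T2.min' h else tstar + 1 with hsstar
  have hts : tstar < sstar := by
    rw [hsstar]
    split_ifs with h
    · exact (Finset.mem_filter.mp (T2.min'_mem h)).2
    · linarith
  have hmaxlt : ∀ r ∈ TAvals, r < sstar → r ≤ tstar := by
    intro r hr hrs
    by_contra hcon
    push_neg at hcon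
    have hrT2 : r ∈ T2 := Finset.mem_filter.mpr ⟨hr, hcon⟩
    have hT2ne : T2.Nonempty := ⟨r, hrT2⟩
    rw [hsstar, dif_pos hT2ne] at hrs
    exact absurd (T2.min'_le r hrT2) (not_le.mpr hrs)
  set Bad : Finset ℝ := (univ.image (fun u : V => y u + a v u))
      ∪ (univ.image (fun w : V => y w - a w v))
      ∪ ((univ : Finset (V × V)).image (fun p : V × V => y p.1 + a p.2 p.1 - a p.2 v)) with hBad
  obtain ⟨t, ⟨⟨hts1, hts2⟩, htBad⟩⟩ : ((Set.Ioo tstar sstar) \ (Bad : Set ℝ)).Nonempty := by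
    apply Set.Infinite.nonempty
    exact Set.Infinite.diff (Set.infinite_coe_iff.mp (Set.Ioo.infinite hts)) (Bad.finite_toSet)
  have htB1 : ∀ u : V, t ≠ y u + a v u := by
    intro u h
    exact htBad (Finset.mem_coe.mpr (Finset.mem_union.mpr (Or.inl (Finset.mem_union.mpr
      (Or.inl (Finset.mem_image.mpr ⟨u, Finset.mem_univ _, h.symm⟩))))))
  have htB2 : ∀ w : V, t ≠ y w - a w v := by
    intro w h
    exact htBad (Finset.mem_coe.mpr (Finset.mem_union.mpr (Or.inl (Finset.mem_union.mpr
      (Or.inr (Finset.mem_image.mpr ⟨w, Finset.mem_univ _, h.symm⟩))))))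
  have htB3 : ∀ u w : V, t ≠ y u + a w u - a w v := by
    intro u w h
    exact htBad (Finset.mem_coe.mpr (Finset.mem_union.mpr (Or.inr
      (Finset.mem_image.mpr ⟨(u, w), Finset.mem_univ _, h.symm⟩))))
  set y' := Function.update y v t with hy'
  have hyv' : y' v = t := Function.update_self v t y
  have hyw' : ∀ w, w ≠ v → y' w = y w := fun w hw => Function.update_of_ne hw t y
  have hmono : ∀ w, y w ≤ y' w := by
    intro w
    by_cases hw : w = v
    · rw [hw, hyv']; linarith
    · rw [hyw' w hw]
  have hyvlt : y v < y' v := by rw [hyv']; linarith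
  -- the counted set at v after the raise
  have hins : univ.filter (fun u => G.Adj u v ∧ a v u < y' v - y' u) = insert ustar counted := by
    ext u
    simp only [Finset.mem_filter, Finset.mem_univ, true_and, Finset.mem_insert]
    constructor
    · rintro ⟨hadj, hlt⟩
      have hne : u ≠ v := hadj.ne
      rw [hyv', hyw' u hne] at hlt
      by_cases hu : u = ustar
      · exact Or.inl hu
      · right
        rw [hcnt, Finset.mem_filter]
        refine ⟨Finset.mem_univ _, hadj, ?_⟩
        by_contra hnot
        push_neg at hnot
        have h1 : y v < y u + a v u :=
          by
            have := hE1 u v hadj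
            have h2 : y v - y u < a v u := lt_of_le_of_ne hnot this
            linarith
        have hmem : y u + a v u ∈ TAvals := by
          rw [hTAv]
          exact Finset.mem_image.mpr ⟨u, Finset.mem_filter.mpr
            ⟨Finset.mem_filter.mpr ⟨Finset.mem_univ _, hadj⟩, h1⟩, rfl⟩
        have hge : tstar ≤ y u + a v u := TAvals.min'_le _ hmem
        have hlt2 : y u + a v u < sstar := by linarith
        have hle2 : y u + a v u ≤ tstar := hmaxlt _ hmem hlt2
        have heq : y u + a v u = tstar := le_antisymm hle2 hge
        rw [← hθ] at heq
        exact hE2 v u ustar hadj hadjstar hu heq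
    · rintro (rfl | hu)
      · refine ⟨hadjstar, ?_⟩
        rw [hyv', hyw' u (hadjstar.ne)]
        have : y u + a v u = tstar := hθ
        linarith
      · rw [hcnt, Finset.mem_filter] at hu
        obtain ⟨_, hadj, hlt⟩ := hu
        refine ⟨hadj, ?_⟩
        rw [hyv', hyw' u hadj.ne]
        linarith
  have hustar_not : ustar ∉ counted := by
    rw [hcnt, Finset.mem_filter]
    rintro ⟨_, _, hlt⟩
    have : y ustar + a v ustar = tstar := hθ
    linarith
  have hfcv : fcount G a y' v = fcount G a y v + 1 := by
    rw [hfc]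
    unfold fcount
    rw [hins, Finset.card_insert_of_notMem hustar_not]
  have hfcw : ∀ w, w ≠ v → fcount G a y' w ≤ fcount G a y w := by
    intro w hw
    unfold fcount
    apply Finset.card_le_card
    intro u hu
    rw [Finset.mem_filter] at hu ⊢
    obtain ⟨_, hadj, hlt⟩ := hu
    refine ⟨Finset.mem_univ _, hadj, ?_⟩
    rw [hyw' w hw] at hlt
    have := hmono u
    linarith
  have hG1 : GoodE1 G a y' := by
    intro u w hadj
    by_cases hw : w = v
    · have hadj' : G.Adj u v := hw ▸ hadj
      have hu : u ≠ v := hadj'.ne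
      rw [hw, hyv', hyw' u hu]
      intro h
      exact htB1 u (by linarith)
    · by_cases hu : u = v
      · rw [hu, hyw' w hw, hyv']
        intro h
        exact htB2 w (by linarith)
      · rw [hyw' w hw, hyw' u hu]
        exact hE1 u w hadj
  have hG2 : GoodE2 G a y' := by
    intro w u u' hadj hadj' hne
    by_cases hu : u = v
    · have hne' : u' ≠ v := fun h => hne (hu.trans h.symm)
      rw [hu, hyv', hyw' u' hne']
      intro h
      exact htB3 u' w (by linarith)
    · by_cases hu' : u' = v
      · have hne2 : u ≠ v := fun h => hne (h.trans hu'.symm)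
        rw [hu', hyv', hyw' u hne2]
        intro h
        exact htB3 u w (by linarith)
      · rw [hyw' u hu, hyw' u' hu']
        exact hE2 w u u' hadj hadj' hne
  have hcle : ∀ w, fcount G a y' w ≤ c w := by
    intro w
    by_cases hw : w = v
    · rw [hw, hfcv]
      have := hv
      omega
    · exact le_trans (hfcw w hw) (hle w)
  refine ⟨y', ustar, hG1, hG2, hcle, hyw', hmono, hyvlt, hadjstar, ?_, ?_⟩
  · rw [hθ]
    exact hyvt
  · rw [hθ, hyv']
    exact hts1

lemma nat_infinite_exists_ge {S : Set ℕ} (hS : S.Infinite) (m : ℕ) : ∃ n ∈ S, m ≤ n := by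
  by_contra h
  push_neg at h
  exact hS (Set.Finite.subset (Set.finite_Iio m) (fun n hn => h n hn))

lemma exists_realization {G : SimpleGraph V} {a : V → V → ℝ} {xc : V → ℝ}
    (hcentral : ∀ u v : V, G.Adj u v → xc u - xc v < a u v)
    (hE2init : GoodE2 G a xc)
    (c : V → ℕ)
    (hdeg : ∀ w, c w ≤ (univ.filter (fun u => G.Adj u w)).card)
    (hpark : ∀ W : Finset V, W.Nonempty →
      ∃ i ∈ W, c i ≤ (univ.filter (fun u => u ∉ W ∧ G.Adj i u)).card) :
    ∃ y : V → ℝ, GoodE1 G a y ∧ ∀ v, fcount G a y v = c v := by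
  classical
  have hE1init : GoodE1 G a xc := by
    intro u v hadj
    exact ne_of_lt (hcentral v u (G.adj_symm hadj))
  have hf0 : ∀ v, fcount G a xc v = 0 := by
    intro v
    unfold fcount
    rw [Finset.card_eq_zero]
    rw [Finset.filter_eq_empty_iff]
    rintro u _ ⟨hadj, hlt⟩
    exact absurd hlt (not_lt.mpr (le_of_lt (hcentral v u (G.adj_symm hadj))))
  -- the step function
  set next : (V → ℝ) → (V → ℝ) := fun y =>
    if h : GoodE1 G a y ∧ GoodE2 G a y ∧ (∀ w, fcount G a y w ≤ c w) ∧
        ∃ v, fcount G a y v < c v then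
      (step_exists h.1 h.2.1 h.2.2.1 hdeg h.2.2.2.choose_spec).choose
    else y
    with hnextdef
  set seq : ℕ → (V → ℝ) := fun n => next^[n] xc with hseqdef
  have hseq0 : seq 0 = xc := rfl
  have hseqsucc : ∀ n, seq (n + 1) = next (seq n) := by
    intro n
    rw [hseqdef]
    exact Function.iterate_succ_apply' next n xc
  -- spec of a genuine step
  have hnextspec : ∀ y : V → ℝ,
      GoodE1 G a y → GoodE2 G a y → (∀ w, fcount G a y w ≤ c w) →
      (∃ v, fcount G a y v < c v) →
      ∃ v u, fcount G a y v < c v ∧ GoodE1 G a (next y) ∧ GoodE2 G a (next y) ∧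
        (∀ w, fcount G a (next y) w ≤ c w) ∧ (∀ w, w ≠ v → next y w = y w) ∧
        (∀ w, y w ≤ next y w) ∧ y v < next y v ∧ G.Adj u v ∧
        y v < y u + a v u ∧ y u + a v u < next y v := by
    intro y h1 h2 h3 h4
    have hfull : GoodE1 G a y ∧ GoodE2 G a y ∧ (∀ w, fcount G a y w ≤ c w) ∧
        ∃ v, fcount G a y v < c v := ⟨h1, h2, h3, h4⟩
    have hrw : next y =
        (step_exists hfull.1 hfull.2.1 hfull.2.2.1 hdeg hfull.2.2.2.choose_spec).choose := by
      simp only [hnextdef]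
      rw [dif_pos hfull]
    have hspec := (step_exists hfull.1 hfull.2.1 hfull.2.2.1 hdeg
      hfull.2.2.2.choose_spec).choose_spec
    obtain ⟨u, hu⟩ := hspec
    refine ⟨hfull.2.2.2.choose, u, hfull.2.2.2.choose_spec, ?_⟩
    rw [hrw]
    exact hu
  -- invariant
  have hInv : ∀ n, GoodE1 G a (seq n) ∧ GoodE2 G a (seq n) ∧ ∀ w, fcount G a (seq n) w ≤ c w := by
    intro n
    induction n with
    | zero =>
      rw [hseq0]
      exact ⟨hE1init, hE2init, fun w => by rw [hf0]; exact Nat.zero_le _⟩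
    | succ n ih =>
      rw [hseqsucc]
      by_cases hd : ∃ v, fcount G a (seq n) v < c v
      · obtain ⟨v, u, hdata⟩ := hnextspec (seq n) ih.1 ih.2.1 ih.2.2 hd
        exact ⟨hdata.2.1, hdata.2.2.1, hdata.2.2.2.1⟩
      · have : next (seq n) = seq n := by
          simp only [hnextdef]
          rw [dif_neg]
          rintro ⟨_, _, _, hcon⟩
          exact hd hcon
        rw [this]
        exact ih
  -- termination
  have hterm : ∃ n, ∀ v, c v ≤ fcount G a (seq n) v := by
    by_contra hcon
    push_neg at hcon
    have hd : ∀ n, ∃ v, fcount G a (seq n) v < c v := fun n => hcon n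
    have hdata : ∀ n, ∃ v u, fcount G a (seq n) v < c v ∧
        (∀ w, w ≠ v → seq (n + 1) w = seq n w) ∧ (∀ w, seq n w ≤ seq (n + 1) w) ∧
        seq n v < seq (n + 1) v ∧ G.Adj u v ∧
        seq n v < seq n u + a v u ∧ seq n u + a v u < seq (n + 1) v := by
      intro n
      obtain ⟨v, u, h⟩ := hnextspec (seq n) (hInv n).1 (hInv n).2.1 (hInv n).2.2 (hd n)
      refine ⟨v, u, h.1, ?_, ?_, ?_, h.2.2.2.2.2.2.2.1, h.2.2.2.2.2.2.2.2.1, ?_⟩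
      · rw [hseqsucc]; exact h.2.2.2.2.1
      · rw [hseqsucc]; exact h.2.2.2.2.2.1
      · rw [hseqsucc]; exact h.2.2.2.2.2.2.1
      · rw [hseqsucc]; exact h.2.2.2.2.2.2.2.2.2
    choose vfun ufun hdata using hdata
    have hmono : ∀ w m n, m ≤ n → seq m w ≤ seq n w := by
      intro w m n hmn
      induction n, hmn using Nat.le_induction with
      | base => exact le_refl _
      | succ n hmn ih => exact le_trans ih ((hdata n).2.2.1 w)
    have hconst : ∀ w N, (∀ n, N ≤ n → vfun n ≠ w) → ∀ n, N ≤ n → seq n w = seq N w := by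
      intro w N hne n hn
      induction n, hn using Nat.le_induction with
      | base => rfl
      | succ n hn ih =>
        rw [← ih]
        exact (hdata n).2.1 w (fun hc => hne n hn (hc ▸ rfl))
    -- fiber infinite means raised beyond any point
    have hfiber_of_unbdd : ∀ w, ¬ BddAbove (Set.range fun n => seq n w) →
        ∀ m, ∃ n, m ≤ n ∧ vfun n = w := by
      intro w hub m
      by_contra hnon
      push_neg at hnon
      have : ∀ n, m ≤ n → seq n w = seq m w := hconst w m (fun n hn => hnon n hn)
      apply hub
      refine ⟨seq m w, ?_⟩
      rintro z ⟨n, rfl⟩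
      show seq n w ≤ seq m w
      by_cases hn : m ≤ n
      · rw [this n hn]
      · exact hmono w n m (le_of_not_ge hn)
    by_cases hbdd : ∀ w, BddAbove (Set.range fun n => seq n w)
    · -- all bounded : limit cycle contradiction
      set L : V → ℝ := fun w => ⨆ n, seq n w with hL
      have hyL : ∀ n w, seq n w ≤ L w := fun n w => le_ciSup (hbdd w) n
      have hfib : ∃ w, {n | vfun n = w}.Infinite := by
        by_contra h
        push_neg at h
        have hfin : ∀ w, {n | vfun n = w}.Finite := fun w => h w
        have hcov : (Set.univ : Set ℕ) = ⋃ w : V, {n | vfun n = w} := by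
          ext n
          simp only [Set.mem_univ, Set.mem_iUnion, Set.mem_setOf_eq, true_iff]
          exact ⟨vfun n, rfl⟩
        exact Set.infinite_univ (hcov ▸ Set.finite_iUnion hfin)
      have hclaim : ∀ w : V, {n | vfun n = w}.Infinite →
          ∃ u, G.Adj w u ∧ {n | vfun n = u}.Infinite ∧ L u = L w - a w u := by
        intro w hw
        obtain ⟨u, hT⟩ : ∃ u, {n | vfun n = w ∧ ufun n = u}.Infinite := by
          by_contra h
          push_neg at h
          have hfin : ∀ u, {n | vfun n = w ∧ ufun n = u}.Finite :=
            fun u => h u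
          have hcov : {n | vfun n = w} = ⋃ u : V, {n | vfun n = w ∧ ufun n = u} := by
            ext n
            simp only [Set.mem_setOf_eq, Set.mem_iUnion]
            exact ⟨fun h' => ⟨ufun n, h', rfl⟩, fun ⟨u, h', _⟩ => h'⟩
          exact hw (hcov ▸ Set.finite_iUnion hfin)
        obtain ⟨n₁, hn₁⟩ := hT.nonempty
        have hadj : G.Adj u w := by
          have := (hdata n₁).2.2.2.2.1
          rw [hn₁.1, hn₁.2] at this
          exact this
        have hLu : L u ≤ L w - a w u := by
          apply ciSup_le
          intro m
          obtain ⟨n, hnT, hmn⟩ := nat_infinite_exists_ge hT m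
          have h2 := (hdata n).2.2.2.2.2.2
          rw [hnT.1, hnT.2] at h2
          have h3 := hyL (n + 1) w
          have h4 := hmono u m n hmn
          linarith
        have hLw : L w ≤ L u + a w u := by
          apply ciSup_le
          intro m
          obtain ⟨n, hnT, hmn⟩ := nat_infinite_exists_ge hT m
          have h2 := (hdata n).2.2.2.2.2.1
          rw [hnT.1, hnT.2] at h2
          have h3 := hyL n u
          have h4 := hmono w m n hmn
          linarith
        have hinf : {n | vfun n = u}.Infinite := by
          by_contra hufin
          have hufin' : {n | vfun n = u}.Finite := Set.not_infinite.mp hufin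
          obtain ⟨N, hN⟩ := hufin'.bddAbove
          have hne : ∀ n, N + 1 ≤ n → vfun n ≠ u := by
            intro n hn hc
            have := hN hc
            omega
          have hcst : ∀ n, N + 1 ≤ n → seq n u = seq (N + 1) u := hconst u (N + 1) hne
          have hLuval : L u = seq (N + 1) u := by
            apply le_antisymm
            · apply ciSup_le
              intro m
              calc seq m u ≤ seq (max m (N + 1)) u := hmono u m _ (le_max_left _ _)
                _ = seq (N + 1) u := hcst _ (le_max_right _ _)
            · exact hyL (N + 1) u
          obtain ⟨n, hnT, hmn⟩ := nat_infinite_exists_ge hT (N + 1)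
          have h2 := (hdata n).2.2.2.2.2.2
          rw [hnT.1, hnT.2] at h2
          have h3 : seq n u = seq (N + 1) u := hcst n hmn
          have h4 := hyL (n + 1) w
          have : L u + a w u = L w := by linarith
          rw [hLuval] at this
          linarith
        exact ⟨u, G.adj_symm hadj, hinf, by linarith⟩
      -- build F on the subtype and find a cycle
      obtain ⟨w₀, hw₀⟩ := hfib
      set Wt := {w : V // {n | vfun n = w}.Infinite} with hWt
      have : Nonempty Wt := ⟨⟨w₀, hw₀⟩⟩
      set F : Wt → Wt := fun w => ⟨(hclaim w.1 w.2).choose, (hclaim w.1 w.2).choose_spec.2.1⟩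
        with hFdef
      have hFadj : ∀ w : Wt, G.Adj w.1 (F w).1 := fun w => (hclaim w.1 w.2).choose_spec.1
      have hFL : ∀ w : Wt, L (F w).1 = L w.1 - a w.1 (F w).1 :=
        fun w => (hclaim w.1 w.2).choose_spec.2.2
      obtain ⟨m, n, hmn, heq⟩ : ∃ m n : ℕ, m < n ∧ F^[m] ⟨w₀, hw₀⟩ = F^[n] ⟨w₀, hw₀⟩ := by
        obtain ⟨m, n, hne, heq⟩ :=
          Finite.exists_ne_map_eq_of_infinite (fun n : ℕ => F^[n] ⟨w₀, hw₀⟩)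
        rcases lt_or_gt_of_ne hne with hlt | hlt
        · exact ⟨m, n, hlt, heq⟩
        · exact ⟨n, m, hlt, heq.symm⟩
      set z := F^[m] ⟨w₀, hw₀⟩ with hz
      have hFp : F^[n - m] z = z := by
        rw [hz, ← Function.iterate_add_apply, show n - m + m = n by omega, ← heq]
      set p := n - m with hp
      have hp0 : 0 < p := by omega
      have hiter : ∀ j, (F^[j + 1] z) = F (F^[j] z) := fun j => Function.iterate_succ_apply' F j z
      have hsum1 : ∑ j ∈ Finset.range p, (L (F^[j] z).1 - L (F^[j + 1] z).1)
          = L (F^[0] z).1 - L (F^[p] z).1 := Finset.sum_range_sub' (fun j => L (F^[j] z).1) p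
      have hsum2 : ∑ j ∈ Finset.range p, (xc (F^[j] z).1 - xc (F^[j + 1] z).1)
          = xc (F^[0] z).1 - xc (F^[p] z).1 := Finset.sum_range_sub' (fun j => xc (F^[j] z).1) p
      have hterm_eq : ∀ j, L (F^[j] z).1 - L (F^[j + 1] z).1 = a (F^[j] z).1 (F^[j + 1] z).1 := by
        intro j
        rw [hiter j]
        have := hFL (F^[j] z)
        linarith
      have hterm_lt : ∀ j, xc (F^[j] z).1 - xc (F^[j + 1] z).1
          < L (F^[j] z).1 - L (F^[j + 1] z).1 := by
        intro j
        rw [hterm_eq j, hiter j]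
        exact hcentral _ _ (hFadj (F^[j] z))
      have hlt : ∑ j ∈ Finset.range p, (xc (F^[j] z).1 - xc (F^[j + 1] z).1)
          < ∑ j ∈ Finset.range p, (L (F^[j] z).1 - L (F^[j + 1] z).1) :=
        Finset.sum_lt_sum_of_nonempty (Finset.nonempty_range_iff.mpr (by omega))
          (fun j _ => hterm_lt j)
      rw [hsum1, hsum2] at hlt
      rw [Function.iterate_zero, hFp] at hlt
      simp at hlt
    · -- some coordinate unbounded : parking contradiction
      push_neg at hbdd
      set Winf := univ.filter (fun w : V => ¬ BddAbove (Set.range fun n => seq n w)) with hWinf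
      have hWne : Winf.Nonempty := by
        obtain ⟨w, hw⟩ := hbdd
        exact ⟨w, Finset.mem_filter.mpr ⟨Finset.mem_univ _, hw⟩⟩
      obtain ⟨i, hiW, hic⟩ := hpark Winf hWne
      have hiub : ¬ BddAbove (Set.range fun n => seq n i) := (Finset.mem_filter.mp hiW).2
      -- bounds for the bounded vertices
      have hMex : ∀ u : V, ∃ M : ℝ, u ∉ Winf → ∀ n, seq n u ≤ M := by
        intro u
        by_cases hu : u ∉ Winf
        · have hb : BddAbove (Set.range fun n => seq n u) := by
            by_contra hcon2
            exact hu (Finset.mem_filter.mpr ⟨Finset.mem_univ _, hcon2⟩)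
          obtain ⟨M, hM⟩ := hb
          exact ⟨M, fun _ n => hM ⟨n, rfl⟩⟩
        · exact ⟨0, fun h => absurd h hu⟩
      choose Mfun hMfun using hMex
      set R := (insert (0:ℝ) ((univ.filter (fun u => u ∉ Winf ∧ G.Adj i u)).image
        (fun u => Mfun u + a i u))).max' ⟨0, Finset.mem_insert_self _ _⟩ with hR
      obtain ⟨n₀, hn₀⟩ : ∃ n₀, R < seq n₀ i := by
        rw [not_bddAbove_iff] at hiub
        obtain ⟨z, ⟨n₀, rfl⟩, hz⟩ := hiub R
        exact ⟨n₀, hz⟩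
      obtain ⟨n, hnn₀, hvn⟩ := hfiber_of_unbdd i hiub n₀
      have hdef : fcount G a (seq n) i < c i := by
        have := (hdata n).1
        rwa [hvn] at this
      have hbig : (univ.filter (fun u => u ∉ Winf ∧ G.Adj i u))
          ⊆ univ.filter (fun u => G.Adj u i ∧ a i u < seq n i - seq n u) := by
        intro u hu
        rw [Finset.mem_filter] at hu ⊢
        obtain ⟨_, huW, hadj⟩ := hu
        refine ⟨Finset.mem_univ _, G.adj_symm hadj, ?_⟩
        have h1 : Mfun u + a i u ≤ R := by
          apply Finset.le_max'
          rw [Finset.mem_insert]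
          right
          exact Finset.mem_image.mpr ⟨u, Finset.mem_filter.mpr ⟨Finset.mem_univ _, huW, hadj⟩, rfl⟩
        have h2 := hMfun u huW n
        have h3 : seq n₀ i ≤ seq n i := hmono i n₀ n hnn₀
        linarith
      have : c i ≤ fcount G a (seq n) i := le_trans hic (Finset.card_le_card hbig)
      omega
  obtain ⟨n, hn⟩ := hterm
  refine ⟨seq n, (hInv n).1, fun v => le_antisymm ((hInv n).2.2 v) (hn v)⟩

/-- For every acyclic partial orientation `O` of `G` there is an `a`-admissible partial
orientation with the same indegree sequence. -/
theorem exists_admissible_same_indeg (G : SimpleGraph V) (a : V → V → ℝ)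
    (hA : HasCentral G a) (O : Finset (V × V)) (hO : IsAcyclicPO G O) :
    ∃ O' : Finset (V × V), IsPO G O' ∧ IsAdmissible G a O' ∧
      ∀ v : V, indeg O' v = indeg O v := by
  classical
  obtain ⟨x₀, hx₀⟩ := hA
  have hpos : ∀ u v, G.Adj u v → 0 < a u v + a v u := by
    intro u v hadj
    have h1 := hx₀ u v hadj
    have h2 := hx₀ v u (G.adj_symm hadj)
    linarith
  obtain ⟨xc, hxc, hE2⟩ := exists_initial ⟨x₀, hx₀⟩
  obtain ⟨y, hE1, hfc⟩ := exists_realization hxc hE2 (fun v => indeg O v)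
    (fun w => indeg_le_deg hO.1 w) (fun W hW => parking_of_acyclic hO W hW)
  refine ⟨Ocand G a y, Ocand_isPO hpos y, Ocand_admissible hE1, ?_⟩
  intro v
  rw [indeg_Ocand, hfc v]
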